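/- Let G be a finite graph and v a vertex such that some maximum independent set of G does not contain v. Among maximum independent sets not containing v, let I be one containing the fewest neighbors of v, let W be the set of neighbors of v not in I, and let w be any neighbor of v in I (such w exists). Then every maximum independent set of the induced subgraph G \ (W ∪ {v}) contains w. -/

import Mathlib

variable {V : Type*}

/-- `I` is an independent set of `G`. -/
def IsIndep (G : SimpleGraph V) (I : Set V) : Prop :=
  ∀ a ∈ I, ∀ b ∈ I, ¬ G.Adj a b

/-- Let `G` be a finite graph and `v` a vertex such that
some maximum independent set avoids `v`.  Among maximum independent sets not
containing `v`, let `I` contain the fewest neighbours of `v`, and let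
`W = N(v) \ I`.  Then some neighbour `w` of `v` lies in `I`, and for every
such `w`, every maximum independent set of the induced subgraph
`G \ (W ∪ {v})` contains `w`; independent sets of `G \ (W ∪ {v})` are
identified with independent sets of `G` disjoint from `W ∪ {v}`. -/
theorem mem_every_maxIndep_of_delete [Fintype V]
    (G : SimpleGraph V) (v : V)
    (hex : ∃ J : Set V, IsIndep G J ∧ (∀ K : Set V, IsIndep G K → K.ncard ≤ J.ncard) ∧ v ∉ J)
    (I : Set V) (hIind : IsIndep G I) (hvI : v ∉ I)
    (hImax : ∀ J : Set V, IsIndep G J → J.ncard ≤ I.ncard)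
    (hfewest : ∀ J : Set V, IsIndep G J → v ∉ J →
      (∀ K : Set V, IsIndep G K → K.ncard ≤ J.ncard) →
      ({x ∈ I | G.Adj v x}).ncard ≤ ({x ∈ J | G.Adj v x}).ncard) :
    (∃ w : V, G.Adj v w ∧ w ∈ I) ∧
    (∀ w : V, G.Adj v w → w ∈ I →
      ∀ J : Set V, IsIndep G J →
        J ∩ ({x | G.Adj v x ∧ x ∉ I} ∪ {v}) = ∅ →
        (∀ K : Set V, IsIndep G K →
          K ∩ ({x | G.Adj v x ∧ x ∉ I} ∪ {v}) = ∅ → K.ncard ≤ J.ncard) →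
        w ∈ J) := by
  constructor
  · by_contra h
    push_neg at h
    have hins : IsIndep G (insert v I) := by
      intro a ha b hb hab
      rcases ha with rfl | ha
      · rcases hb with rfl | hb
        · exact G.loopless.irrefl _ hab
        · exact h b hab hb
      · rcases hb with rfl | hb
        · exact h a (hab.symm) ha
        · exact hIind a ha b hb hab
    have hle := hImax _ hins
    have : (insert v I).ncard = I.ncard + 1 := Set.ncard_insert_of_notMem hvI I.toFinite
    omega
  · intro w hadj hwI J hJind hJdisj hJmax
    have hdis : ∀ x ∈ J, ¬ (x ∈ ({x | G.Adj v x ∧ x ∉ I} ∪ {v} : Set V)) := by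
      intro x hx hmem
      have : x ∈ J ∩ ({x | G.Adj v x ∧ x ∉ I} ∪ {v}) := ⟨hx, hmem⟩
      rw [hJdisj] at this
      exact this
    have hvJ : v ∉ J := fun hv => hdis v hv (Or.inr rfl)
    have hIdis : I ∩ ({x | G.Adj v x ∧ x ∉ I} ∪ {v}) = ∅ := by
      ext x
      simp only [Set.mem_inter_iff, Set.mem_union, Set.mem_setOf_eq, Set.mem_singleton_iff,
        Set.mem_empty_iff_false, iff_false]
      rintro ⟨hxI, ⟨-, hni⟩ | rfl⟩
      · exact hni hxI
      · exact hvI hxI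
    have h1 : I.ncard ≤ J.ncard := hJmax I hIind hIdis
    have h2 : J.ncard ≤ I.ncard := hImax J hJind
    have heq : J.ncard = I.ncard := le_antisymm h2 h1
    have hJtop : ∀ K : Set V, IsIndep G K → K.ncard ≤ J.ncard := fun K hK =>
      heq ▸ hImax K hK
    have hfew := hfewest J hJind hvJ hJtop
    have hsub : {x ∈ J | G.Adj v x} ⊆ {x ∈ I | G.Adj v x} := by
      rintro x ⟨hxJ, hxadj⟩
      by_contra hx
      simp only [Set.mem_setOf_eq] at hx
      have hni : x ∉ I := fun hxI => hx ⟨hxI, hxadj⟩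
      exact hdis x hxJ (Or.inl ⟨hxadj, hni⟩)
    have hseq : {x ∈ J | G.Adj v x} = {x ∈ I | G.Adj v x} :=
      Set.eq_of_subset_of_ncard_le hsub hfew (Set.toFinite _)
    have : w ∈ {x ∈ J | G.Adj v x} := hseq ▸ (⟨hwI, hadj⟩ : w ∈ {x ∈ I | G.Adj v x})
    exact this.1
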